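/- arXiv:1206.5046 — 2 statements merged into one kernel-verified Lean document; each statement's English description precedes it below -/
import Mathlib

section
/- For generalized Laguerre polynomials with parameter α > -1 and n ≥ 1, the diagonal integral a_{n,n}^{(α)}(x) := ∫₀ˣ (L_n^{(α)}(y))² e^{-y} y^α dy satisfies the recursion a_{n,n}^{(α)}(x) = (1/n)[ L_n^{(α)}(x) L_{n-1}^{(α+1)}(x) e^{-x} x^{α+1} + a_{n-1,n-1}^{(α+1)}(x) ], with a_{0,0}^{(α)}(x) = γ(α+1, x), the lower incomplete gamma function. -/
open MeasureTheory intervalIntegral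

noncomputable def laguerre (α : ℝ) (n : ℕ) (x : ℝ) : ℝ :=
  ∑ k ∈ Finset.range (n + 1),
    (-1 : ℝ) ^ k * Real.Gamma (α + n + 1) /
      (Real.Gamma (α + k + 1) * (Nat.factorial (n - k)) * (Nat.factorial k)) * x ^ k

/-- The truncated diagonal weighted inner product of Laguerre polynomials:
`a_{n,n}^{(α)}(x) = ∫₀ˣ (L_n^{(α)}(y))² e^{-y} y^α dy`. -/
noncomputable def laguerreDiag (α : ℝ) (n : ℕ) (x : ℝ) : ℝ :=
  ∫ y in (0 : ℝ)..x, (laguerre α n y) ^ 2 * Real.exp (-y) * y ^ α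

/-- The lower incomplete gamma function `γ(a, x) = ∫₀ˣ e^{-y} y^{a-1} dy`. -/
noncomputable def lowerGamma (a x : ℝ) : ℝ :=
  ∫ y in (0 : ℝ)..x, Real.exp (-y) * y ^ (a - 1)

/-- The coefficients of the Laguerre polynomials. -/
noncomputable def lc (α : ℝ) (n k : ℕ) : ℝ :=
  (-1 : ℝ) ^ k * Real.Gamma (α + n + 1) /
      (Real.Gamma (α + k + 1) * (Nat.factorial (n - k)) * (Nat.factorial k))

lemma laguerre_eq (α : ℝ) (n : ℕ) (x : ℝ) :
    laguerre α n x = ∑ k ∈ Finset.range (n + 1), lc α n k * x ^ k := rfl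

lemma gamma_pos (α : ℝ) (hα : -1 < α) (k : ℕ) : 0 < Real.Gamma (α + k + 1) :=
  Real.Gamma_pos_of_pos (by have : (0:ℝ) ≤ k := Nat.cast_nonneg k; linarith)

lemma laguerre_zero (α : ℝ) (hα : -1 < α) (y : ℝ) : laguerre α 0 y = 1 := by
  have h := (gamma_pos α hα 0).ne'
  rw [laguerre_eq, Finset.sum_range_one]
  simp only [lc, Nat.cast_zero, pow_zero, one_mul, Nat.sub_zero, Nat.factorial_zero,
    Nat.cast_one, mul_one]
  rw [div_self]
  simpa using h

lemma continuous_laguerre (α : ℝ) (n : ℕ) : Continuous (laguerre α n) := by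
  unfold laguerre
  exact continuous_finset_sum _ fun k _ => continuous_const.mul (continuous_pow k)

/-- coefficient identity (i): derivative of Laguerre. -/
lemma lc_deriv (α : ℝ) (hα : -1 < α) (n i : ℕ) :
    lc α (n+1) (i+1) * ((i:ℝ)+1) = -(lc (α+1) n i) := by
  simp only [lc, Nat.succ_sub_succ, Nat.factorial_succ]
  push_cast
  rw [show α + ((n:ℝ)+1) + 1 = α + 1 + n + 1 by ring, show α + ((i:ℝ)+1) + 1 = α + 1 + i + 1 by ring]
  have hg1 : Real.Gamma (α + 1 + (i:ℝ) + 1) ≠ 0 := by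
    refine (Real.Gamma_pos_of_pos ?_).ne'
    have : (0:ℝ) ≤ i := Nat.cast_nonneg i
    linarith
  have hf1 : ((n-i).factorial : ℝ) ≠ 0 := Nat.cast_ne_zero.2 (Nat.factorial_ne_zero _)
  have hf2 : ((i).factorial : ℝ) ≠ 0 := Nat.cast_ne_zero.2 (Nat.factorial_ne_zero _)
  have hi : ((i:ℝ) + 1) ≠ 0 := by positivity
  field_simp
  ring

lemma lc_id0 (α : ℝ) (hα : -1 < α) (m : ℕ) :
    lc (α+1) m 0 * (α+1) = ((m:ℝ)+1) * lc α (m+1) 0 := by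
  simp only [lc, Nat.sub_zero, Nat.factorial_zero, Nat.factorial_succ]
  push_cast
  rw [show Real.Gamma (α + 1 + 0 + 1) = (α+1) * Real.Gamma (α+1) from by
        rw [show α+1+(0:ℝ)+1 = (α+1)+1 by ring]; exact Real.Gamma_add_one (by linarith),
      show α + (0:ℝ) + 1 = α + 1 by ring,
      show α + ((m:ℝ)+1) + 1 = α + 1 + ↑m + 1 by ring]
  have hg1 : Real.Gamma (α + 1) ≠ 0 := (Real.Gamma_pos_of_pos (by linarith)).ne'
  have hf1 : ((m).factorial : ℝ) ≠ 0 := Nat.cast_ne_zero.2 (Nat.factorial_ne_zero _)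
  have h2 : (α:ℝ) + 1 ≠ 0 := by linarith
  have hm : ((m:ℝ) + 1) ≠ 0 := by positivity
  field_simp

lemma lc_idmid (α : ℝ) (hα : -1 < α) (m i : ℕ) (him : i < m) :
    lc (α+1) m (i+1) * (α+2+i) = ((m:ℝ)+1) * lc α (m+1) (i+1) + lc (α+1) m i := by
  obtain ⟨j, rfl⟩ : ∃ j, m = i + j + 1 := ⟨m - i - 1, by omega⟩
  have h1 : i + j + 1 - (i+1) = j := by omega
  have h2 : i + j + 1 - i = j + 1 := by omega
  have h3 : i + j + 1 + 1 - (i + 1) = j + 1 := by omega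
  have hipos : (0:ℝ) ≤ i := Nat.cast_nonneg i
  have hjpos : (0:ℝ) ≤ j := Nat.cast_nonneg j
  simp only [lc, h1, h2, h3, Nat.factorial_succ]
  push_cast
  rw [show Real.Gamma (α + 1 + ((i:ℝ) + 1) + 1) = (α+↑i+2) * Real.Gamma (α+↑i+2) from by
        rw [show α+1+((i:ℝ)+1)+1 = (α+↑i+2)+1 by ring]; exact Real.Gamma_add_one (by linarith),
      show α + ((i:ℝ)+1) + 1 = α+↑i+2 by ring,
      show α + 1 + (i:ℝ) + 1 = α+↑i+2 by ring,
      show α + ((i:ℝ)+↑j+1+1) + 1 = α + 1 + (↑i+↑j+1) + 1 by ring]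
  have hg1 : Real.Gamma (α + ↑i + 2) ≠ 0 := (Real.Gamma_pos_of_pos (by linarith)).ne'
  have hf1 : ((i).factorial : ℝ) ≠ 0 := Nat.cast_ne_zero.2 (Nat.factorial_ne_zero _)
  have hf2 : ((j).factorial : ℝ) ≠ 0 := Nat.cast_ne_zero.2 (Nat.factorial_ne_zero _)
  have h4 : (α:ℝ) + i + 2 ≠ 0 := by linarith
  have h5 : ((i:ℝ) + 1) ≠ 0 := by positivity
  have h6 : ((j:ℝ) + 1) ≠ 0 := by positivity
  field_simp
  ring

lemma lc_idtop (α : ℝ) (hα : -1 < α) (m : ℕ) :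
    ((m:ℝ)+1) * lc α (m+1) (m+1) + lc (α+1) m m = 0 := by
  have hmpos : (0:ℝ) ≤ m := Nat.cast_nonneg m
  simp only [lc, Nat.sub_self, Nat.factorial_zero, Nat.factorial_succ]
  push_cast
  rw [show α + ((m:ℝ)+1) + 1 = α + 1 + ↑m + 1 by ring]
  have hg1 : Real.Gamma (α + 1 + (m:ℝ) + 1) ≠ 0 := (Real.Gamma_pos_of_pos (by linarith)).ne'
  have hf1 : ((m).factorial : ℝ) ≠ 0 := Nat.cast_ne_zero.2 (Nat.factorial_ne_zero _)
  have hm : ((m:ℝ) + 1) ≠ 0 := by positivity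
  field_simp
  ring

/-- The key polynomial identity. -/
lemma sum_id (α : ℝ) (hα : -1 < α) (m : ℕ) (y : ℝ) :
    ∑ k ∈ Finset.range (m+1), lc (α+1) m k * ((α+1+(k:ℝ)) * y^k - y^(k+1))
      = ((m:ℝ)+1) * laguerre α (m+1) y := by
  have key : ∑ k ∈ Finset.range (m+1), lc (α+1) m k * ((α+1+(k:ℝ)) * y^k)
      = ((m:ℝ)+1) * laguerre α (m+1) y
        + ∑ k ∈ Finset.range (m+1), lc (α+1) m k * y^(k+1) := by
    rw [laguerre_eq, Finset.mul_sum,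
      Finset.sum_range_succ' (fun k => ((m:ℝ)+1) * (lc α (m+1) k * y^k)) (m+1),
      add_right_comm, ← Finset.sum_add_distrib,
      Finset.sum_range_succ
        (fun i => ((m:ℝ)+1) * (lc α (m+1) (i+1) * y^(i+1)) + lc (α+1) m i * y^(i+1)) m]
    have htop : ((m:ℝ)+1) * (lc α (m+1) (m+1) * y^(m+1)) + lc (α+1) m m * y^(m+1) = 0 := by
      linear_combination (lc_idtop α hα m) * y^(m+1)
    rw [htop, add_zero,
      Finset.sum_range_succ' (fun k => lc (α+1) m k * ((α+1+(k:ℝ)) * y^k)) m]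
    have hmain : ∀ i ∈ Finset.range m,
        lc (α+1) m (i+1) * ((α+1+((i+1:ℕ):ℝ)) * y^(i+1))
          = ((m:ℝ)+1) * (lc α (m+1) (i+1) * y^(i+1)) + lc (α+1) m i * y^(i+1) := by
      intro i hi
      have h := lc_idmid α hα m i (Finset.mem_range.1 hi)
      push_cast
      linear_combination h * y^(i+1)
    rw [Finset.sum_congr rfl hmain]
    push_cast
    linear_combination (lc_id0 α hα m)
  calc ∑ k ∈ Finset.range (m+1), lc (α+1) m k * ((α+1+(k:ℝ)) * y^k - y^(k+1))
      = ∑ k ∈ Finset.range (m+1), (lc (α+1) m k * ((α+1+(k:ℝ)) * y^k)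
          - lc (α+1) m k * y^(k+1)) := by
        exact Finset.sum_congr rfl fun k _ => by ring
    _ = ∑ k ∈ Finset.range (m+1), lc (α+1) m k * ((α+1+(k:ℝ)) * y^k)
          - ∑ k ∈ Finset.range (m+1), lc (α+1) m k * y^(k+1) := Finset.sum_sub_distrib _ _
    _ = ((m:ℝ)+1) * laguerre α (m+1) y := by rw [key]; ring

lemma hasDerivAt_laguerre (α : ℝ) (hα : -1 < α) (n : ℕ) (x : ℝ) :
    HasDerivAt (laguerre α (n+1)) (-(laguerre (α+1) n x)) x := by
  have h : HasDerivAt (fun y => ∑ k ∈ Finset.range (n+1+1), lc α (n+1) k * y^k)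
      (∑ k ∈ Finset.range (n+1+1), lc α (n+1) k * ((k:ℝ) * x^(k-1))) x :=
    HasDerivAt.fun_sum fun k _ => (hasDerivAt_pow k x).const_mul _
  have heq : (∑ k ∈ Finset.range (n+1+1), lc α (n+1) k * ((k:ℝ) * x^(k-1)))
      = -(laguerre (α+1) n x) := by
    rw [Finset.sum_range_succ' (fun k => lc α (n+1) k * ((k:ℝ) * x^(k-1))) (n+1), laguerre_eq]
    have hmain : ∀ i ∈ Finset.range (n+1),
        lc α (n+1) (i+1) * (((i+1:ℕ):ℝ) * x^(i+1-1)) = -(lc (α+1) n i * x^i) := by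
      intro i _
      have h := lc_deriv α hα n i
      simp only [Nat.add_sub_cancel]
      push_cast
      linear_combination h * x^i
    rw [Finset.sum_congr rfl hmain, Finset.sum_neg_distrib]
    simp
  rw [show laguerre α (n+1) = fun y => ∑ k ∈ Finset.range (n+1+1), lc α (n+1) k * y^k from
    funext fun y => laguerre_eq α (n+1) y]
  exact heq ▸ h

lemma hasDerivAt_weight (p : ℝ) (k : ℕ) {y : ℝ} (hy : 0 < y) :
    HasDerivAt (fun z : ℝ => Real.exp (-z) * z ^ p * z ^ k)
      (Real.exp (-y) * y ^ (p - 1) * ((p + k) * y ^ k - y ^ (k+1))) y := by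
  have hyne : y ≠ 0 := ne_of_gt hy
  have h1 : HasDerivAt (fun z : ℝ => Real.exp (-z)) (-Real.exp (-y)) y := by
    simpa using ((hasDerivAt_id y).neg.exp)
  have h2 : HasDerivAt (fun z : ℝ => z ^ (p + k)) ((p + k) * y ^ (p + k - 1)) y :=
    Real.hasDerivAt_rpow_const (Or.inl hyne)
  have h3 := h1.fun_mul h2
  have h4 : HasDerivAt (fun z : ℝ => Real.exp (-z) * z ^ p * z ^ k)
      (-Real.exp (-y) * y ^ (p + (k:ℝ)) + Real.exp (-y) * ((p + k) * y ^ (p + (k:ℝ) - 1))) y := by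
    refine h3.congr_of_eventuallyEq ?_
    filter_upwards [Ioi_mem_nhds hy] with z hz
    rw [Real.rpow_add hz, Real.rpow_natCast, mul_assoc]
  have e1 : y ^ (p + (k:ℝ)) = y ^ (p-1) * y^(k+1) := by
    rw [show p + (k:ℝ) = (p-1) + ((k+1 : ℕ):ℝ) by push_cast; ring, Real.rpow_add hy,
      Real.rpow_natCast]
  have e2 : y ^ (p + (k:ℝ) - 1) = y ^ (p-1) * y^k := by
    rw [show p + (k:ℝ) - 1 = (p-1) + ((k : ℕ):ℝ) by ring, Real.rpow_add hy,
      Real.rpow_natCast]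
  convert h4 using 1
  rw [e1, e2]
  ring

lemma hasDerivAt_G (α : ℝ) (hα : -1 < α) (m : ℕ) {y : ℝ} (hy : 0 < y) :
    HasDerivAt (fun z => Real.exp (-z) * z ^ (α+1) * laguerre (α+1) m z)
      (Real.exp (-y) * y ^ α * (((m:ℝ)+1) * laguerre α (m+1) y)) y := by
  have hfun : (fun z : ℝ => Real.exp (-z) * z ^ (α+1) * laguerre (α+1) m z)
      = fun z => ∑ k ∈ Finset.range (m+1), lc (α+1) m k * (Real.exp (-z) * z ^ (α+1) * z^k) := by
    funext z; rw [laguerre_eq, Finset.mul_sum]; exact Finset.sum_congr rfl fun k _ => by ring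
  rw [hfun]
  have h := HasDerivAt.fun_sum (fun k (_ : k ∈ Finset.range (m+1)) =>
    (hasDerivAt_weight (α+1) k hy).const_mul (lc (α+1) m k))
  refine h.congr_deriv ?_
  rw [← sum_id α hα m y, Finset.mul_sum]
  refine Finset.sum_congr rfl fun k _ => ?_
  rw [show α + 1 - 1 = α by ring]
  ring

lemma intInt (α : ℝ) (hα : -1 < α) (n : ℕ) (x : ℝ) :
    IntervalIntegrable (fun y => (laguerre α n y)^2 * Real.exp (-y) * y^α) volume 0 x := by
  have h := intervalIntegrable_rpow' (a := (0:ℝ)) (b := x) hα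
  have hc : Continuous fun y : ℝ => (laguerre α n y)^2 * Real.exp (-y) :=
    ((continuous_laguerre α n).pow 2).mul (Real.continuous_exp.comp continuous_neg)
  exact h.continuousOn_mul hc.continuousOn

theorem laguerreDiag_recursion (α : ℝ) (hα : -1 < α) (x : ℝ) (hx : 0 < x) :
    laguerreDiag α 0 x = lowerGamma (α + 1) x ∧
      ∀ n : ℕ, 1 ≤ n →
        laguerreDiag α n x =
          (1 / (n : ℝ)) *
            (laguerre α n x * laguerre (α + 1) (n - 1) x * Real.exp (-x) * x ^ (α + 1) +
              laguerreDiag (α + 1) (n - 1) x) := by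
  constructor
  · unfold laguerreDiag lowerGamma
    refine intervalIntegral.integral_congr fun y _ => ?_
    rw [laguerre_zero α hα, show α + 1 - 1 = α by ring]
    ring
  · intro n hn
    obtain ⟨m, rfl⟩ : ∃ m, n = m + 1 := ⟨n - 1, (Nat.succ_pred_eq_of_pos hn).symm⟩
    simp only [Nat.add_sub_cancel]
    have hα1 : -1 < α + 1 := by linarith
    set F : ℝ → ℝ := fun z =>
      laguerre α (m+1) z * (Real.exp (-z) * z ^ (α+1) * laguerre (α+1) m z) with hF
    set D : ℝ → ℝ := fun y =>
      ((m:ℝ)+1) * ((laguerre α (m+1) y)^2 * Real.exp (-y) * y^α)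
        - (laguerre (α+1) m y)^2 * Real.exp (-y) * y^(α+1) with hD
    have hderiv : ∀ y ∈ Set.Ioo (0:ℝ) x, HasDerivWithinAt F (D y) (Set.Ioi y) y := by
      intro y hy
      have h1 := (hasDerivAt_laguerre α hα m y).fun_mul (hasDerivAt_G α hα m hy.1)
      have h2 : HasDerivAt F (D y) y := by
        refine h1.congr_deriv ?_
        rw [hD]
        ring
      exact h2.hasDerivWithinAt
    have hcont : ContinuousOn F (Set.Icc 0 x) := by
      refine Continuous.continuousOn ?_
      have hr : Continuous fun z : ℝ => z ^ (α+1) := by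
        rw [continuous_iff_continuousAt]
        exact fun z => Real.continuousAt_rpow_const z (α+1) (Or.inr (by linarith))
      exact (continuous_laguerre α (m+1)).mul
        (((Real.continuous_exp.comp continuous_neg).mul hr).mul (continuous_laguerre (α+1) m))
    have hintD : IntervalIntegrable D volume 0 x :=
      ((intInt α hα (m+1) x).const_mul _).sub (intInt (α+1) hα1 m x)
    have hftc := intervalIntegral.integral_eq_sub_of_hasDeriv_right_of_le hx.le hcont hderiv hintD
    have hF0 : F 0 = 0 := by
      rw [hF]
      simp [Real.zero_rpow (by linarith : α + 1 ≠ 0)]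
    have hsplit : (∫ y in (0:ℝ)..x, D y)
        = ((m:ℝ)+1) * laguerreDiag α (m+1) x - laguerreDiag (α+1) m x := by
      rw [hD]
      rw [intervalIntegral.integral_sub ((intInt α hα (m+1) x).const_mul _) (intInt (α+1) hα1 m x),
        intervalIntegral.integral_const_mul]
      rfl
    have key : ((m:ℝ)+1) * laguerreDiag α (m+1) x - laguerreDiag (α+1) m x = F x := by
      rw [← hsplit, hftc, hF0, sub_zero]
    have hFx : F x
        = laguerre α (m+1) x * (Real.exp (-x) * x ^ (α+1) * laguerre (α+1) m x) := by rw [hF]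
    rw [hFx] at key
    have hm : ((m:ℝ) + 1) ≠ 0 := by positivity
    push_cast
    field_simp
    linear_combination key
end

section
/- For every real y and nonnegative integer n, ∫_{-∞}^∞ e^{-(x+y)²} H_n(x) dx = √π · (−2y)^n. -/
open MeasureTheory

/-- Physicists' Hermite polynomials. -/
noncomputable def hermite : ℕ → ℝ → ℝ
  | 0, _ => 1
  | 1, x => 2 * x
  | n + 2, x => 2 * x * hermite (n + 1) x - 2 * ((n : ℝ) + 1) * hermite n x

/-- Derivative of `hermite`. -/
noncomputable def hermiteD : ℕ → ℝ → ℝ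
  | 0, _ => 0
  | n + 1, x => 2 * ((n : ℝ) + 1) * hermite n x

@[simp] lemma hermiteD_zero (x : ℝ) : hermiteD 0 x = 0 := rfl

@[simp] lemma hermiteD_succ (n : ℕ) (x : ℝ) :
    hermiteD (n + 1) x = 2 * ((n : ℝ) + 1) * hermite n x := rfl

lemma hermite_two_mul (n : ℕ) (x : ℝ) :
    2 * x * hermite n x = hermite (n + 1) x + hermiteD n x := by
  cases n with
  | zero => simp [hermite, hermiteD]
  | succ m => simp only [hermite, hermiteD]; ring

lemma hermite_hasDerivAt : ∀ (n : ℕ) (x : ℝ),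
    HasDerivAt (fun t => hermite n t) (hermiteD n x) x
  | 0, x => by
      simpa [hermite, hermiteD] using (hasDerivAt_const x (1 : ℝ))
  | 1, x => by
      have h : HasDerivAt (fun t : ℝ => 2 * t) 2 x := by
        simpa using (hasDerivAt_id x).const_mul (2 : ℝ)
      simpa [hermite, hermiteD] using h
  | (n + 2), x => by
      have ih1 := hermite_hasDerivAt (n + 1) x
      have ih0 := hermite_hasDerivAt n x
      have hx : HasDerivAt (fun t : ℝ => 2 * t) 2 x := by
        simpa using (hasDerivAt_id x).const_mul (2 : ℝ)
      have h := ((hx.fun_mul ih1).fun_sub (ih0.const_mul (2 * ((n : ℝ) + 1))))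
      have heq : (fun t : ℝ => 2 * t * hermite (n + 1) t
          - 2 * ((n : ℝ) + 1) * hermite n t) = fun t => hermite (n + 2) t := by
        funext t; simp [hermite]
      rw [heq] at h
      refine h.congr_deriv (Eq.symm ?_)
      have h2 := hermite_two_mul n x
      rw [hermiteD_succ, hermiteD_succ]
      push_cast
      linear_combination (-2 * ((n : ℝ) + 1)) * h2

/-- `hermite` as a polynomial. -/
noncomputable def hermiteP : ℕ → Polynomial ℝ
  | 0 => 1
  | 1 => Polynomial.C 2 * Polynomial.X
  | n + 2 => Polynomial.C 2 * Polynomial.X * hermiteP (n + 1)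
      - Polynomial.C (2 * ((n : ℝ) + 1)) * hermiteP n

lemma hermiteP_eval : ∀ (n : ℕ) (x : ℝ), (hermiteP n).eval x = hermite n x
  | 0, x => by simp [hermiteP, hermite]
  | 1, x => by simp [hermiteP, hermite]
  | (n + 2), x => by
      simp [hermiteP, hermite, hermiteP_eval (n + 1) x, hermiteP_eval n x]

lemma integrable_pow_gaussian (n : ℕ) :
    Integrable fun x : ℝ => x ^ n * Real.exp (-x ^ 2) := by
  have h := integrable_rpow_mul_exp_neg_mul_sq (b := 1) one_pos
    (s := (n : ℝ)) (lt_of_lt_of_le neg_one_lt_zero (Nat.cast_nonneg n))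
  simpa [Real.rpow_natCast, neg_one_mul] using h

lemma integrable_poly_gaussian (p : Polynomial ℝ) :
    Integrable fun x : ℝ => Real.exp (-x ^ 2) * p.eval x := by
  induction p using Polynomial.induction_on' with
  | add p q hp hq =>
      simpa [mul_add] using hp.fun_add hq
  | monomial n a =>
      have h := (integrable_pow_gaussian n).const_mul a
      apply h.congr
      filter_upwards with x
      simp [Polynomial.eval_monomial]
      ring

lemma integrable_poly_shifted_gaussian (p : Polynomial ℝ) (y : ℝ) :
    Integrable fun x : ℝ => Real.exp (-(x + y) ^ 2) * p.eval x := by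
  have h := integrable_poly_gaussian (p.comp (Polynomial.X - Polynomial.C y))
  have hmp : MeasurePreserving (fun x : ℝ => x + y) volume volume :=
    measurePreserving_add_right volume y
  have hemb : MeasurableEmbedding (fun x : ℝ => x + y) :=
    (Homeomorph.addRight y).measurableEmbedding
  have h2 := (hmp.integrable_comp_emb hemb).2 h
  apply h2.congr
  filter_upwards with x
  simp [Function.comp, Polynomial.eval_comp]

lemma integrable_hermite_shifted_gaussian (y : ℝ) (n : ℕ) :
    Integrable fun x : ℝ => Real.exp (-(x + y) ^ 2) * hermite n x := by
  have h := integrable_poly_shifted_gaussian (hermiteP n) y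
  apply h.congr
  filter_upwards with x
  rw [hermiteP_eval]

lemma key_ibp (y : ℝ) (n : ℕ) :
    (∫ x : ℝ, Real.exp (-(x + y) ^ 2)
      * (-(hermite (n + 1) x) - 2 * y * hermite n x)) = 0 := by
  have hderiv : ∀ x : ℝ, HasDerivAt (fun t => Real.exp (-(t + y) ^ 2) * hermite n t)
      (Real.exp (-(x + y) ^ 2) * (-(hermite (n + 1) x) - 2 * y * hermite n x)) x := by
    intro x
    have h1 : HasDerivAt (fun t : ℝ => -(t + y) ^ 2) (-(2 * (x + y))) x := by
      have := (((hasDerivAt_id x).add_const y).fun_pow 2).fun_neg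
      simpa using this
    have he := h1.exp
    have hh := hermite_hasDerivAt n x
    have h := he.fun_mul hh
    refine h.congr_deriv (Eq.symm ?_)
    have h2 := hermite_two_mul n x
    linear_combination Real.exp (-(x + y) ^ 2) * h2
  have hf' : Integrable fun x : ℝ => Real.exp (-(x + y) ^ 2)
      * (-(hermite (n + 1) x) - 2 * y * hermite n x) := by
    have h1 := (integrable_hermite_shifted_gaussian y (n + 1)).neg
    have h2 := (integrable_hermite_shifted_gaussian y n).const_mul (2 * y)
    apply (h1.sub h2).congr
    filter_upwards with x
    simp only [Pi.neg_apply, Pi.sub_apply]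
    ring
  have hf := integrable_hermite_shifted_gaussian y n
  exact integral_eq_zero_of_hasDerivAt_of_integrable hderiv hf' hf

theorem hermite_shifted_gaussian_integral (y : ℝ) (n : ℕ) :
    (∫ x : ℝ, Real.exp (-(x + y) ^ 2) * hermite n x) =
      Real.sqrt Real.pi * (-2 * y) ^ n := by
  induction n with
  | zero =>
      simp only [hermite, mul_one, pow_zero]
      have htrans : (∫ x : ℝ, Real.exp (-(x + y) ^ 2))
          = ∫ x : ℝ, Real.exp (-1 * x ^ 2) := by
        have := integral_add_right_eq_self (μ := volume) (fun x : ℝ => Real.exp (-1 * x ^ 2)) y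
        simp only [neg_one_mul] at this ⊢
        exact this
      rw [htrans, integral_gaussian]
      simp
  | succ m ih =>
      have hkey := key_ibp y m
      have h1 := integrable_hermite_shifted_gaussian y (m + 1)
      have h2 := (integrable_hermite_shifted_gaussian y m).const_mul (2 * y)
      have hsplit : (∫ x : ℝ, Real.exp (-(x + y) ^ 2)
          * (-(hermite (m + 1) x) - 2 * y * hermite m x))
          = -(∫ x : ℝ, Real.exp (-(x + y) ^ 2) * hermite (m + 1) x)
            - 2 * y * (∫ x : ℝ, Real.exp (-(x + y) ^ 2) * hermite m x) := by
        have hfun : (fun x : ℝ => Real.exp (-(x + y) ^ 2)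
            * (-(hermite (m + 1) x) - 2 * y * hermite m x))
            = fun x : ℝ => (fun x => -(Real.exp (-(x + y) ^ 2) * hermite (m + 1) x)) x
              - (fun x => 2 * y * (Real.exp (-(x + y) ^ 2) * hermite m x)) x := by
          funext x; ring
        rw [hfun, integral_sub (by exact h1.neg) h2, integral_neg, integral_const_mul]
      rw [hsplit] at hkey
      have : (∫ x : ℝ, Real.exp (-(x + y) ^ 2) * hermite (m + 1) x)
          = -2 * y * (∫ x : ℝ, Real.exp (-(x + y) ^ 2) * hermite m x) := by
        linarith
      rw [this, ih, pow_succ]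
      ring
end
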